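/- Let A(X) be an acceptable subspace of C_b(X). If A(X) contains a function h with inf_{x∈X} h(x) > 0, then the topologies τ_A and τ_b coincide on M^+(X). -/

import Mathlib

open MeasureTheory Filter Topology BoundedContinuousFunction ENNReal NNReal

noncomputable section

namespace AMPaper

variable (X : Type*) [TopologicalSpace X] [MeasurableSpace X]

/-- The topology `τ_b` on the space of finite nonnegative Borel measures:
the weak topology induced by the pairings `μ ↦ ∫ g dμ`, `g ∈ C_b(X)`. -/
def taub : TopologicalSpace (FiniteMeasure X) :=
  ⨅ g : X →ᵇ ℝ,
    TopologicalSpace.induced (fun μ : FiniteMeasure X => ∫ x, g x ∂(μ : Measure X)) inferInstance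

/-- The topology `τ_A` induced by the pairings with functions from `A ⊆ C_b(X)`. -/
def tauA (A : Set (X →ᵇ ℝ)) : TopologicalSpace (FiniteMeasure X) :=
  ⨅ g ∈ A,
    TopologicalSpace.induced (fun μ : FiniteMeasure X => ∫ x, g x ∂(μ : Measure X)) inferInstance

variable {X}

/-- A closed linear sublattice of `C_b(X)`. -/
structure IsClosedSublattice (A : Set (X →ᵇ ℝ)) : Prop where
  isClosed : IsClosed A
  zero_mem : (0 : X →ᵇ ℝ) ∈ A
  add_mem : ∀ ⦃f g : X →ᵇ ℝ⦄, f ∈ A → g ∈ A → f + g ∈ A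
  smul_mem : ∀ (c : ℝ) ⦃f : X →ᵇ ℝ⦄, f ∈ A → c • f ∈ A
  sup_mem : ∀ ⦃f g h : X →ᵇ ℝ⦄, f ∈ A → g ∈ A → (∀ x, h x = max (f x) (g x)) → h ∈ A
  inf_mem : ∀ ⦃f g h : X →ᵇ ℝ⦄, f ∈ A → g ∈ A → (∀ x, h x = min (f x) (g x)) → h ∈ A

/-- An acceptable subspace of `C_b(X)`: a closed linear sublattice satisfying
the separation property (A2). -/
structure IsAcceptable (A : Set (X →ᵇ ℝ)) extends IsClosedSublattice A : Prop where
  sep : ∀ F : Set X, IsClosed F → ∀ x ∉ F, ∃ g ∈ A,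
    (∀ y, 0 ≤ g y) ∧ (∀ y, g y ≤ 1) ∧ g x = 1 ∧ ∀ y ∈ F, g y = 0

/-- A lower semicontinuous `ρ : X → [0,∞]` is admissible for `E` if `∫ ρ dμ ≥ 1` for all `μ ∈ E`. -/
def AdmissibleFun (ρ : X → ℝ≥0∞) (E : Set (FiniteMeasure X)) : Prop :=
  LowerSemicontinuous ρ ∧ ∀ μ ∈ E, 1 ≤ ∫⁻ x, ρ x ∂(μ : Measure X)

/-- The `M_p` modulus of a family of measures. -/
def Mmod (p : ℝ) (m : Measure X) (E : Set (FiniteMeasure X)) : ℝ≥0∞ :=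
  ⨅ (ρ : X → ℝ≥0∞) (_ : AdmissibleFun ρ E), ∫⁻ x, ρ x ^ p ∂m

/-- The continuous modulus `M_{p,c}^A`, with test functions nonnegative elements of `A`. -/
def McMod (p : ℝ) (A : Set (X →ᵇ ℝ)) (m : Measure X) (E : Set (FiniteMeasure X)) : ℝ≥0∞ :=
  ⨅ (g : X →ᵇ ℝ) (_ : g ∈ A ∧ (∀ x, 0 ≤ g x) ∧
      ∀ μ ∈ E, 1 ≤ ∫⁻ x, ENNReal.ofReal (g x) ∂(μ : Measure X)),
    ∫⁻ x, ENNReal.ofReal (g x) ^ p ∂m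

/-- A sequence of lower semicontinuous functions `ρ_j : X → [0,∞]` is an admissible sequence
for `E` if `liminf_j ∫ ρ_j dμ ≥ 1` for all `μ ∈ E`. -/
def AdmissibleSeq (ρ : ℕ → X → ℝ≥0∞) (E : Set (FiniteMeasure X)) : Prop :=
  (∀ j, LowerSemicontinuous (ρ j)) ∧
    ∀ μ ∈ E, 1 ≤ Filter.liminf (fun j => ∫⁻ x, ρ j x ∂(μ : Measure X)) Filter.atTop

/-- The approximation modulus `AM_p` of a family of measures. -/
def AMmod (p : ℝ) (m : Measure X) (E : Set (FiniteMeasure X)) : ℝ≥0∞ :=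
  ⨅ (ρ : ℕ → X → ℝ≥0∞) (_ : AdmissibleSeq ρ E),
    Filter.liminf (fun j => ∫⁻ x, ρ j x ^ p ∂m) Filter.atTop

/-- The continuous approximation modulus `AM_{p,c}^A`. -/
def AMcMod (p : ℝ) (A : Set (X →ᵇ ℝ)) (m : Measure X) (E : Set (FiniteMeasure X)) : ℝ≥0∞ :=
  ⨅ (g : ℕ → X →ᵇ ℝ) (_ : (∀ j, g j ∈ A ∧ ∀ x, 0 ≤ g j x) ∧
      ∀ μ ∈ E, 1 ≤ Filter.liminf
        (fun j => ∫⁻ x, ENNReal.ofReal (g j x) ∂(μ : Measure X)) Filter.atTop),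
    Filter.liminf (fun j => ∫⁻ x, ENNReal.ofReal (g j x) ^ p ∂m) Filter.atTop

/-- The `L^q(m)`-norm of a function `f : X → [0,∞]`. -/
def lqNorm (q : ℝ≥0∞) (m : Measure X) (f : X → ℝ≥0∞) : ℝ≥0∞ :=
  if q = ∞ then essSup f m else (∫⁻ x, f x ^ q.toReal ∂m) ^ (1 / q.toReal)

variable (X) in
/-- The `p`-content (depending on `p` only through the conjugate exponent `q`):
the supremum of the outer measures `η*(E)` over all plans `η` — finite Borel measures on
`(M^+(X), τ_b)` — whose barycenter `η^#` is absolutely continuous w.r.t. `m` with density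
of `L^q(m)`-norm at most `1`. -/
def Ct (q : ℝ≥0∞) (m : Measure X) (E : Set (FiniteMeasure X)) : ℝ≥0∞ :=
  ⨆ (η : @Measure (FiniteMeasure X) (@borel (FiniteMeasure X) (taub X)))
    (_ : η Set.univ < ∞ ∧ ∃ f : X → ℝ≥0∞, Measurable f ∧
      (∀ B : Set X, MeasurableSet B → (∫⁻ μ, (μ : Measure X) B ∂η) = ∫⁻ x in B, f x ∂m) ∧
      lqNorm q m f ≤ 1),
    η E


section AuxStmt3
open Set

omit [MeasurableSpace X] in
lemma key_pointwise {A : Set (X →ᵇ ℝ)} (hA : IsAcceptable A) (g : X →ᵇ ℝ)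
    (hg : ∀ x, 0 ≤ g x) {q : ℝ} (hq : 0 ≤ q) {x : X} (hx : q < g x) :
    ∃ f ∈ A, (∀ y, 0 ≤ f y) ∧ (∀ y, f y ≤ g y) ∧ q < f x := by
  set α : ℝ := (q + g x) / 2 with hα
  have hα0 : 0 ≤ α := by have := hg x; simp only [hα]; linarith
  have hqα : q < α := by simp only [hα]; linarith
  have hαg : α < g x := by simp only [hα]; linarith
  have hF : IsClosed {z | g z ≤ α} := isClosed_le g.continuous continuous_const
  have hxF : x ∉ {z | g z ≤ α} := by simp [not_le.mpr hαg]
  obtain ⟨φ, hφA, hφ0, hφ1, hφx, hφF⟩ := hA.sep _ hF x hxF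
  refine ⟨α • φ, hA.smul_mem α hφA, ?_, ?_, ?_⟩
  · intro y
    simpa using mul_nonneg hα0 (hφ0 y)
  · intro y
    by_cases hy : g y ≤ α
    · simpa [hφF y hy] using hg y
    · push_neg at hy
      have : α * φ y ≤ α * 1 := mul_le_mul_of_nonneg_left (hφ1 y) hα0
      simpa using this.trans (by linarith)
  · simpa [hφx] using hqα

omit [MeasurableSpace X] in
lemma exists_approx_seq {A : Set (X →ᵇ ℝ)} (hA : IsAcceptable A)
    [SecondCountableTopology X] (g : X →ᵇ ℝ) (hg : ∀ x, 0 ≤ g x) :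
    ∃ F : ℕ → X →ᵇ ℝ, (∀ n, F n ∈ A) ∧ (∀ n x, 0 ≤ F n x) ∧ (∀ n x, F n x ≤ g x) ∧
      ∀ x, Tendsto (fun n => F n x) atTop (𝓝 (g x)) := by
  classical
  set D : Set (X →ᵇ ℝ) := {f | f ∈ A ∧ (∀ y, 0 ≤ f y) ∧ ∀ y, f y ≤ g y} with hD
  have h0D : (0 : X →ᵇ ℝ) ∈ D := ⟨hA.zero_mem, fun y => le_rfl, fun y => by simpa using hg y⟩
  have hcov : ∀ q : ℚ, 0 ≤ (q : ℝ) →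
      ∃ r : Set D, r.Countable ∧ {y | (q : ℝ) < g y} ⊆ ⋃ f ∈ r, {y | (q : ℝ) < (f : X →ᵇ ℝ) y} := by
    intro q hq
    have hLin : IsLindelof {y | (q : ℝ) < g y} := HereditarilyLindelof_LindelofSets _
    refine hLin.elim_countable_subcover (fun f : D => {y | (q : ℝ) < (f : X →ᵇ ℝ) y})
      (fun f => isOpen_lt continuous_const (f : X →ᵇ ℝ).continuous) ?_
    intro y hy
    obtain ⟨f, hfA, hf0, hfg, hfy⟩ := key_pointwise hA g hg hq hy
    exact mem_iUnion.mpr ⟨⟨f, hfA, hf0, hfg⟩, hfy⟩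
  choose! r hrc hrcov using hcov
  set T : Set (X →ᵇ ℝ) :=
    insert 0 (⋃ q ∈ {q : ℚ | 0 ≤ (q : ℝ)}, (fun f : D => (f : X →ᵇ ℝ)) '' r q) with hT
  have hTD : T ⊆ D := by
    rintro f (rfl | hf)
    · exact h0D
    · simp only [mem_iUnion, mem_image] at hf
      obtain ⟨q, hq, ⟨f', _, rfl⟩⟩ := hf
      exact f'.2
  have hTc : T.Countable :=
    (Set.Countable.biUnion (Set.to_countable _) fun q hq => ((hrc q hq).image _)).insert _
  have hTne : T.Nonempty := ⟨0, mem_insert _ _⟩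
  have hTdense : ∀ x : X, ∀ ρ < g x, ∃ f ∈ T, ρ < f x := by
    intro x ρ hρ
    rcases lt_or_ge ρ 0 with hρ0 | hρ0
    · exact ⟨0, mem_insert _ _, by simpa using hρ0⟩
    · obtain ⟨q, hq1, hq2⟩ := exists_rat_btwn hρ
      have hq0 : 0 ≤ (q : ℝ) := le_of_lt (lt_of_le_of_lt hρ0 hq1)
      have hx : x ∈ {y | (q : ℝ) < g y} := hq2
      have := hrcov q hq0 hx
      simp only [mem_iUnion] at this
      obtain ⟨f, hfr, hfx⟩ := this
      exact ⟨(f : X →ᵇ ℝ), Or.inr (mem_iUnion₂.mpr ⟨q, hq0, mem_image_of_mem _ hfr⟩),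
        hq1.trans hfx⟩
  obtain ⟨e, hTe⟩ := Set.Countable.exists_eq_range hTc hTne
  have heD : ∀ n, e n ∈ D := fun n => hTD (hTe ▸ mem_range_self n)
  set F : ℕ → X →ᵇ ℝ := fun n => partialSups e n with hF
  have hFA : ∀ n, F n ∈ A := by
    intro n
    induction n with
    | zero => simpa [hF] using (heD 0).1
    | succ n ih =>
        refine hA.sup_mem ih (heD (n+1)).1 ?_
        intro x
        simp [hF, (partialSups_succ e n : partialSups e (n + 1) = partialSups e n ⊔ e (n + 1))]
  have hF0 : ∀ n x, 0 ≤ F n x := by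
    intro n x
    induction n with
    | zero => simpa [hF] using (heD 0).2.1 x
    | succ n ih =>
        simp only [hF, (partialSups_succ e n : partialSups e (n + 1) = partialSups e n ⊔ e (n + 1)), coe_sup, Pi.sup_apply, le_sup_iff] at *
        rw [show partialSups e (n+1) = partialSups e n ⊔ e (n+1) from partialSups_succ e n, coe_sup, Pi.sup_apply]
        exact le_sup_of_le_left ih
  have hFg : ∀ n x, F n x ≤ g x := by
    intro n x
    induction n with
    | zero => simpa [hF] using (heD 0).2.2 x
    | succ n ih =>
        simp only [hF, (partialSups_succ e n : partialSups e (n + 1) = partialSups e n ⊔ e (n + 1)), coe_sup, Pi.sup_apply, sup_le_iff] at *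
        rw [show partialSups e (n+1) = partialSups e n ⊔ e (n+1) from partialSups_succ e n, coe_sup, Pi.sup_apply]
        exact sup_le ih ((heD (n+1)).2.2 x)
  refine ⟨F, hFA, hF0, hFg, ?_⟩
  intro x
  have hmono : Monotone fun n => F n x := fun m n hmn => (partialSups e).monotone hmn x
  have hbdd : BddAbove (range fun n => F n x) :=
    ⟨g x, by rintro _ ⟨n, rfl⟩; exact hFg n x⟩
  have hsup : ⨆ n, F n x = g x := by
    refine le_antisymm (ciSup_le fun n => hFg n x) ?_
    refine le_of_forall_lt fun ρ hρ => ?_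
    obtain ⟨f, hfT, hfx⟩ := hTdense x ρ hρ
    obtain ⟨n, rfl⟩ := (hTe ▸ hfT : f ∈ range e)
    have h1 : e n x ≤ F n x := le_partialSups e n x
    exact lt_of_lt_of_le (lt_of_lt_of_le hfx h1) (le_ciSup hbdd n)
  have := tendsto_atTop_ciSup hmono hbdd
  rwa [hsup] at this

/-- Approximation from below in `L¹(μ)`. -/
lemma below_approx {A : Set (X →ᵇ ℝ)} (hA : IsAcceptable A)
    [SecondCountableTopology X] [OpensMeasurableSpace X]
    (μ : Measure X) [IsFiniteMeasure μ] (g : X →ᵇ ℝ) (hg : ∀ x, 0 ≤ g x)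
    {ε : ℝ} (hε : 0 < ε) :
    ∃ f ∈ A, (∀ x, f x ≤ g x) ∧ ∫ x, g x ∂μ - ∫ x, f x ∂μ < ε := by
  obtain ⟨F, hFA, hF0, hFg, hFt⟩ := exists_approx_seq hA g hg
  have htd : Tendsto (fun n => ∫ x, F n x ∂μ) atTop (𝓝 (∫ x, g x ∂μ)) := by
    refine tendsto_integral_of_dominated_convergence (fun _ => ‖g‖)
      (fun n => (F n).continuous.aestronglyMeasurable) (integrable_const _) ?_ ?_
    · intro n
      filter_upwards with x
      rw [Real.norm_eq_abs, abs_of_nonneg (hF0 n x)]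
      exact (hFg n x).trans ((le_abs_self _).trans (g.norm_coe_le_norm x))
    · filter_upwards with x using hFt x
  obtain ⟨n, hn⟩ := (htd.eventually (eventually_gt_nhds
    (by linarith : ∫ x, g x ∂μ - ε < ∫ x, g x ∂μ))).exists
  exact ⟨F n, hFA n, hFg n, by linarith⟩

/-- Sandwich lemma: `f₁ ≤ g ≤ f₂` with small `L¹(μ)`-gap. -/
lemma sandwich {A : Set (X →ᵇ ℝ)} (hA : IsAcceptable A)
    [SecondCountableTopology X] [OpensMeasurableSpace X]
    (h : X →ᵇ ℝ) (hmem : h ∈ A) (c : ℝ) (hc : 0 < c) (hbelow : ∀ x, c ≤ h x)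
    (μ : Measure X) [IsFiniteMeasure μ] (g : X →ᵇ ℝ) {ε : ℝ} (hε : 0 < ε) :
    ∃ f₁ ∈ A, ∃ f₂ ∈ A, (∀ x, f₁ x ≤ g x) ∧ (∀ x, g x ≤ f₂ x) ∧
      ∫ x, f₂ x ∂μ - ∫ x, f₁ x ∂μ < ε := by
  set M : ℝ := ‖g‖ / c with hM
  have hM0 : 0 ≤ M := div_nonneg (norm_nonneg g) hc.le
  have hMh : ∀ x, ‖g‖ ≤ M * h x := by
    intro x
    calc ‖g‖ = M * c := by rw [hM, div_mul_cancel₀ _ hc.ne']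
    _ ≤ M * h x := mul_le_mul_of_nonneg_left (hbelow x) hM0
  have habs : ∀ x, |g x| ≤ ‖g‖ := fun x => g.norm_coe_le_norm x
  -- g + M•h ≥ 0
  have h1 : ∀ x, 0 ≤ (g + M • h) x := by
    intro x
    have := (abs_le.mp (habs x)).1
    have := hMh x
    simp only [BoundedContinuousFunction.coe_add, BoundedContinuousFunction.coe_smul,
      Pi.add_apply, Pi.smul_apply, smul_eq_mul]
    linarith
  have h2 : ∀ x, 0 ≤ (M • h - g) x := by
    intro x
    have := (abs_le.mp (habs x)).2
    have := hMh x
    simp only [BoundedContinuousFunction.coe_sub, BoundedContinuousFunction.coe_smul,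
      Pi.sub_apply, Pi.smul_apply, smul_eq_mul]
    linarith
  obtain ⟨u, huA, hug, huI⟩ := below_approx hA μ (g + M • h) h1 (half_pos hε)
  obtain ⟨v, hvA, hvg, hvI⟩ := below_approx hA μ (M • h - g) h2 (half_pos hε)
  refine ⟨u + (-M) • h, hA.add_mem huA (hA.smul_mem _ hmem),
    M • h + (-1 : ℝ) • v, hA.add_mem (hA.smul_mem _ hmem) (hA.smul_mem _ hvA), ?_, ?_, ?_⟩
  · intro x
    have := hug x
    simp only [BoundedContinuousFunction.coe_add, BoundedContinuousFunction.coe_smul,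
      Pi.add_apply, Pi.smul_apply, smul_eq_mul] at *
    linarith
  · intro x
    have := hvg x
    simp only [BoundedContinuousFunction.coe_add, BoundedContinuousFunction.coe_sub,
      BoundedContinuousFunction.coe_smul, Pi.add_apply, Pi.sub_apply,
      Pi.smul_apply, smul_eq_mul] at *
    linarith
  · have hInt : ∀ w : X →ᵇ ℝ, Integrable w μ := fun w => w.integrable μ
    have e1 : ∫ x, (g + M • h) x ∂μ = ∫ x, g x ∂μ + M * ∫ x, h x ∂μ := by
      simp only [BoundedContinuousFunction.coe_add, BoundedContinuousFunction.coe_smul,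
        Pi.add_apply, Pi.smul_apply, smul_eq_mul]
      rw [integral_add (hInt g) ((hInt h).const_mul M), integral_const_mul]
    have e2 : ∫ x, (M • h - g) x ∂μ = M * ∫ x, h x ∂μ - ∫ x, g x ∂μ := by
      simp only [BoundedContinuousFunction.coe_sub, BoundedContinuousFunction.coe_smul,
        Pi.sub_apply, Pi.smul_apply, smul_eq_mul]
      rw [integral_sub ((hInt h).const_mul M) (hInt g), integral_const_mul]
    have e3 : ∫ x, (u + (-M) • h) x ∂μ = ∫ x, u x ∂μ + (-M) * ∫ x, h x ∂μ := by
      simp only [BoundedContinuousFunction.coe_add, BoundedContinuousFunction.coe_smul,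
        Pi.add_apply, Pi.smul_apply, smul_eq_mul]
      rw [integral_add (hInt u) ((hInt h).const_mul (-M)), integral_const_mul]
    have e4 : ∫ x, (M • h + (-1 : ℝ) • v) x ∂μ = M * ∫ x, h x ∂μ + (-1) * ∫ x, v x ∂μ := by
      simp only [BoundedContinuousFunction.coe_add, BoundedContinuousFunction.coe_smul,
        Pi.add_apply, Pi.smul_apply, smul_eq_mul]
      rw [integral_add ((hInt h).const_mul M) ((hInt v).const_mul (-1)), integral_const_mul,
        integral_const_mul]
    rw [e1] at huI
    rw [e2] at hvI
    rw [e3, e4]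
    linarith

end AuxStmt3

theorem stmt3 {X : Type*} [TopologicalSpace X] [PolishSpace X] [MeasurableSpace X] [BorelSpace X]
    (A : Set (X →ᵇ ℝ)) (hA : IsAcceptable A)
    (h : X →ᵇ ℝ) (hmem : h ∈ A) (c : ℝ) (hc : 0 < c) (hbelow : ∀ x, c ≤ h x) :
    tauA X A = taub X := by
  refine le_antisymm ?_ (le_iInf₂ fun g _ => iInf_le _ g)
  refine le_iInf fun g => ?_
  suffices hcont : @Continuous _ _ (tauA X A) _
      (fun μ : FiniteMeasure X => ∫ x, g x ∂(μ : Measure X)) from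
    continuous_iff_le_induced.mp hcont
  have key : ∀ f ∈ A, @Continuous _ _ (tauA X A) _
      (fun μ : FiniteMeasure X => ∫ x, f x ∂(μ : Measure X)) := by
    intro f hf
    refine (@continuous_iff_le_induced _ _ _ (tauA X A) _).mpr ?_
    rw [tauA]
    exact iInf₂_le f hf
  rw [@continuous_iff_continuousAt _ _ (tauA X A) _]
  intro μ₀
  show @Tendsto _ _ (fun μ : FiniteMeasure X => ∫ x, g x ∂(μ : Measure X))
    (@nhds _ (tauA X A) μ₀) (𝓝 (∫ x, g x ∂(μ₀ : Measure X)))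
  rw [Metric.tendsto_nhds]
  intro ε hε
  obtain ⟨f₁, hf₁A, f₂, hf₂A, hf₁g, hgf₂, hgap⟩ :=
    sandwich hA h hmem c hc hbelow (μ₀ : Measure X) g (by positivity : (0:ℝ) < ε/3)
  have h₁ := (@Continuous.tendsto _ _ (tauA X A) _ _ (key f₁ hf₁A) μ₀).eventually
    (eventually_gt_nhds (by linarith : ∫ x, f₁ x ∂(μ₀ : Measure X) - ε/3
      < ∫ x, f₁ x ∂(μ₀ : Measure X)))
  have h₂ := (@Continuous.tendsto _ _ (tauA X A) _ _ (key f₂ hf₂A) μ₀).eventually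
    (eventually_lt_nhds (by linarith : ∫ x, f₂ x ∂(μ₀ : Measure X)
      < ∫ x, f₂ x ∂(μ₀ : Measure X) + ε/3))
  filter_upwards [h₁, h₂] with μ hμ₁ hμ₂
  have hInt : ∀ (w : X →ᵇ ℝ) (ν : FiniteMeasure X), Integrable w (ν : Measure X) :=
    fun w ν => w.integrable _
  have m1 : ∫ x, f₁ x ∂(μ : Measure X) ≤ ∫ x, g x ∂(μ : Measure X) :=
    integral_mono (hInt f₁ μ) (hInt g μ) hf₁g
  have m2 : ∫ x, g x ∂(μ : Measure X) ≤ ∫ x, f₂ x ∂(μ : Measure X) :=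
    integral_mono (hInt g μ) (hInt f₂ μ) hgf₂
  have m3 : ∫ x, f₁ x ∂(μ₀ : Measure X) ≤ ∫ x, g x ∂(μ₀ : Measure X) :=
    integral_mono (hInt f₁ μ₀) (hInt g μ₀) hf₁g
  have m4 : ∫ x, g x ∂(μ₀ : Measure X) ≤ ∫ x, f₂ x ∂(μ₀ : Measure X) :=
    integral_mono (hInt g μ₀) (hInt f₂ μ₀) hgf₂
  rw [Real.dist_eq, abs_sub_lt_iff]
  constructor <;> linarith


end AMPaper

end
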